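/- For all natural numbers k, j with j + k > 0 and every rational number r with r + k ≠ 1, the generalized binomial coefficients satisfy (1/(r+k−1)) · binom(−r, k) · binom(1−r−k, j) = (−1/(j+k)) · binom(−r, k+j−1) · binom(k+j, j). -/

import Mathlib

/-- The generalized binomial coefficient `binom(x, m) = x(x−1)⋯(x−m+1)/m!`. -/
noncomputable def qbinom (x : ℚ) (m : ℕ) : ℚ :=
  (descPochhammer ℚ m).eval x / m.factorial

/-- For naturals `k, j` with `j + k > 0` and rational `r` with `r + k ≠ 1`:
`(1/(r+k−1)) binom(−r, k) binom(1−r−k, j) = (−1/(j+k)) binom(−r, k+j−1) binom(k+j, j)`. -/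
theorem binom_identity_one (k j : ℕ) (hjk : 0 < j + k) (r : ℚ) (hr : r + k ≠ 1) :
    1 / (r + k - 1) * qbinom (-r) k * qbinom (1 - r - k) j =
      -1 / (j + k : ℚ) * qbinom (-r) (k + j - 1) * ((k + j).choose j : ℚ) := by
  have hr' : r + (k : ℚ) - 1 ≠ 0 := sub_ne_zero.mpr hr
  obtain ⟨n, hn⟩ : ∃ n, k + j = n + 1 := ⟨k + j - 1, by omega⟩
  have key : (descPochhammer ℚ k).eval (-r) * (descPochhammer ℚ j).eval (1 - r - k) =
      -(r + k - 1) * (descPochhammer ℚ n).eval (-r) := by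
    rcases k with _ | k'
    · -- k = 0, so j = n + 1
      have hj : j = n + 1 := by omega
      subst hj
      rw [descPochhammer_succ_left]
      simp only [descPochhammer_zero, Polynomial.eval_one, one_mul, Polynomial.eval_mul,
        Polynomial.eval_comp, Polynomial.eval_sub, Polynomial.eval_X, Polynomial.eval_one,
        Nat.cast_zero]
      ring_nf
    · have hkj : k' + j = n := by omega
      have hmul := congrArg (Polynomial.eval (-r)) (descPochhammer_mul (R := ℚ) k' j)
      simp only [Polynomial.eval_mul, Polynomial.eval_comp, Polynomial.eval_sub,
        Polynomial.eval_X, Polynomial.eval_natCast] at hmul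
      rw [descPochhammer_succ_eval, hkj] at *
      push_cast
      rw [show (1 : ℚ) - r - (↑k' + 1) = -r - ↑k' by ring] at *
      rw [show -(r + (↑k' + 1) - 1) = -r - (k' : ℚ) by ring, ← hmul]
      ring
  have hfact : ((k + j).choose j : ℚ) * (j.factorial : ℚ) * (k.factorial : ℚ) =
      ((k + j).factorial : ℚ) := by
    have := Nat.choose_mul_factorial_mul_factorial (n := k + j) (k := j) (by omega)
    rw [show k + j - j = k by omega] at this
    exact_mod_cast this
  have hfs : ((k + j).factorial : ℚ) = (n + 1) * (n.factorial : ℚ) := by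
    rw [hn]; push_cast [Nat.factorial_succ]; ring
  have hkj1 : k + j - 1 = n := by omega
  have hjk' : (j : ℚ) + k = (n : ℚ) + 1 := by
    have : j + k = n + 1 := by omega
    exact_mod_cast this
  simp only [qbinom, hkj1, hjk']
  have h1 : ((k.factorial : ℚ)) ≠ 0 := by positivity
  have h2 : ((j.factorial : ℚ)) ≠ 0 := by positivity
  have h3 : ((n.factorial : ℚ)) ≠ 0 := by positivity
  have h4 : ((n : ℚ) + 1) ≠ 0 := by positivity
  set D := (descPochhammer ℚ n).eval (-r) with hD
  have L : 1 / (r + ↑k - 1) * ((descPochhammer ℚ k).eval (-r) / ↑k.factorial) *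
      ((descPochhammer ℚ j).eval (1 - r - ↑k) / ↑j.factorial) =
      -D / (↑k.factorial * ↑j.factorial) := by
    rw [div_mul_div_comm, div_mul_div_comm, one_mul, key,
      show -(r + ↑k - 1) * D = (r + ↑k - 1) * -D by ring,
      mul_assoc (r + (k:ℚ) - 1), mul_div_mul_left _ _ hr']
  rw [L]
  field_simp
  linear_combination D * hfact + D * hfs
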